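/- arXiv:2504.15907 — 3 statements merged into one kernel-verified Lean document; each statement's English description precedes it below -/
import Mathlib

section
/- Let a, p₁, p₂, b be nonzero complex constants with 9ab² = −4. If f is an entire function satisfying f(z)² + a·(f'(z))² = p₁·e^{bz} + p₂·e^{−bz} for all z ∈ ℂ, then either there exist complex constants l₁, l₂ with l₂² = (9/8)p₁ and l₁² = p₂²/(8p₁) such that f(z) = l₁e^{−(3b/2)z} + l₂e^{(b/2)z} for all z, or there exist complex constants l₃, l₄ with l₄² = (9/8)p₂ and l₃² = p₁²/(8p₂) such that f(z) = l₃e^{(3b/2)z} + l₄e^{−(b/2)z} for all z. -/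
open Complex Set Filter Metric

private lemma entire_zero_of_eventually {u : ℂ → ℂ} (hu : Differentiable ℂ u) {z₀ : ℂ}
    (h : ∀ᶠ z in nhds z₀, u z = 0) : ∀ z, u z = 0 := by
  have ha : AnalyticOnNhd ℂ u univ := analyticOnNhd_univ_iff_differentiable.2 hu
  have := ha.eqOn_zero_of_preconnected_of_eventuallyEq_zero isPreconnected_univ (mem_univ z₀)
    (by filter_upwards [h] with z hz; simp [hz])
  intro z; exact this (mem_univ z)

private lemma entire_mul_zero {u v : ℂ → ℂ} (hu : Differentiable ℂ u) (hv : Differentiable ℂ v)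
    (h : ∀ z, u z * v z = 0) : (∀ z, u z = 0) ∨ (∀ z, v z = 0) := by
  by_contra hc
  push_neg at hc
  obtain ⟨⟨z₁, hz₁⟩, ⟨z₂, hz₂⟩⟩ := hc
  have hev : ∀ᶠ z in nhds z₂, u z = 0 := by
    have hcont : ContinuousAt v z₂ := (hv z₂).continuousAt
    have : ∀ᶠ z in nhds z₂, v z ≠ 0 := hcont.eventually_ne hz₂
    filter_upwards [this] with z hz
    rcases mul_eq_zero.1 (h z) with h' | h'
    · exact h'
    · exact absurd h' hz
  exact hz₁ (entire_zero_of_eventually hu hev z₁)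

private lemma wronskian_zero {M D : ℂ → ℂ} (hM : Differentiable ℂ M) (hD : Differentiable ℂ D)
    (h : ∀ z, deriv M z * D z = M z * deriv D z) {z₀ : ℂ} (hD0 : D z₀ ≠ 0) (hM0 : M z₀ = 0) :
    ∀ z, M z = 0 := by
  have hcont : ContinuousAt D z₀ := (hD z₀).continuousAt
  obtain ⟨r, hr, hball⟩ := Metric.eventually_nhds_iff_ball.1 (hcont.eventually_ne hD0)
  set q : ℂ → ℂ := fun z => M z / D z with hq
  have hq0 : ∀ z ∈ ball z₀ r, HasDerivAt q 0 z := by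
    intro z hz
    have hd : HasDerivAt q ((deriv M z * D z - M z * deriv D z) / D z ^ 2) z :=
      (hM z).hasDerivAt.div (hD z).hasDerivAt (hball z hz)
    simpa [h z] using hd
  have hqc : ∀ z ∈ ball z₀ r, q z = q z₀ := by
    intro z hz
    apply (convex_ball z₀ r).is_const_of_fderivWithin_eq_zero
      (fun w hw => ((hq0 w hw).differentiableAt).differentiableWithinAt) ?_ hz
      (mem_ball_self hr)
    intro w hw
    rw [fderivWithin_of_isOpen isOpen_ball hw]
    rw [(hq0 w hw).hasFDerivAt.fderiv]
    ext v
    simp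
  have hev : ∀ᶠ z in nhds z₀, M z = 0 := by
    rw [Metric.eventually_nhds_iff_ball]
    refine ⟨r, hr, fun z hz => ?_⟩
    have h3 : M z / D z = 0 := (hqc z hz).trans (by simp [hq, hM0])
    rcases div_eq_zero_iff.1 h3 with h5 | h5
    · exact h5
    · exact absurd h5 (hball z hz)
  exact entire_zero_of_eventually hM hev

private lemma two_freq {c q r : ℂ} (hc : c ≠ 0) (h : ∀ z : ℂ, q + r * Complex.exp (c * z) = 0) :
    q = 0 ∧ r = 0 := by
  have h0 := h 0
  rw [mul_zero, Complex.exp_zero, mul_one] at h0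
  have h1 := h (↑Real.pi * I / c)
  rw [show c * (↑Real.pi * I / c) = ↑Real.pi * I by field_simp, Complex.exp_pi_mul_I] at h1
  constructor
  · linear_combination (h0 + h1) / 2
  · linear_combination (h0 - h1) / 2

private lemma exp_cpow (c z : ℂ) (n : ℕ) : Complex.exp (c * z) ^ n = Complex.exp ((n : ℂ) * (c * z)) :=
  (Complex.exp_nat_mul _ n).symm

theorem stmt_3 (a p₁ p₂ b : ℂ) (ha : a ≠ 0) (hp₁ : p₁ ≠ 0) (hp₂ : p₂ ≠ 0) (hb : b ≠ 0)
    (hab : 9 * a * b ^ 2 = -4)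
    (f : ℂ → ℂ) (hf : Differentiable ℂ f)
    (heq : ∀ z : ℂ, f z ^ 2 + a * (deriv f z) ^ 2
        = p₁ * Complex.exp (b * z) + p₂ * Complex.exp (-b * z)) :
    (∃ l₁ l₂ : ℂ, l₂ ^ 2 = 9 / 8 * p₁ ∧ l₁ ^ 2 = p₂ ^ 2 / (8 * p₁) ∧
      ∀ z : ℂ, f z = l₁ * Complex.exp (-(3 * b / 2) * z) + l₂ * Complex.exp (b / 2 * z)) ∨
    (∃ l₃ l₄ : ℂ, l₄ ^ 2 = 9 / 8 * p₂ ∧ l₃ ^ 2 = p₁ ^ 2 / (8 * p₂) ∧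
      ∀ z : ℂ, f z = l₃ * Complex.exp (3 * b / 2 * z) + l₄ * Complex.exp (-(b / 2) * z)) := by
  have hb2 : (9 : ℂ) * b ^ 2 ≠ 0 := mul_ne_zero (by norm_num) (pow_ne_zero 2 hb)
  have h6b : (6 : ℂ) * b ≠ 0 := mul_ne_zero (by norm_num) hb
  -- analyticity: all derivatives of f are entire
  have hfa : AnalyticOnNhd ℂ f univ := analyticOnNhd_univ_iff_differentiable.2 hf
  have hf1 : Differentiable ℂ (deriv f) := analyticOnNhd_univ_iff_differentiable.1 hfa.deriv
  have hf2 : Differentiable ℂ (deriv (deriv f)) :=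
    analyticOnNhd_univ_iff_differentiable.1 hfa.deriv.deriv
  -- exponential basics
  have hEE : ∀ z : ℂ, Complex.exp (b * z) * Complex.exp (-b * z) = 1 := by
    intro z
    rw [← Complex.exp_add, show b * z + -b * z = 0 by ring, Complex.exp_zero]
  have hexpb : Differentiable ℂ fun z : ℂ => Complex.exp (b * z) :=
    (differentiable_id.const_mul b).cexp
  have hexpnb : Differentiable ℂ fun z : ℂ => Complex.exp (-b * z) :=
    (differentiable_id.const_mul (-b)).cexp
  have hbEd : ∀ z : ℂ, HasDerivAt (fun w : ℂ => Complex.exp (b * w)) (b * Complex.exp (b * z)) z := by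
    intro z
    have h := ((hasDerivAt_id z).const_mul b).cexp
    simp only [id_eq] at h
    refine h.congr_deriv ?_
    ring
  have hnbEd : ∀ z : ℂ, HasDerivAt (fun w : ℂ => Complex.exp (-b * w)) (-b * Complex.exp (-b * z)) z := by
    intro z
    have h := ((hasDerivAt_id z).const_mul (-b)).cexp
    simp only [id_eq] at h
    refine h.congr_deriv ?_
    ring
  -- the half-exponentials
  obtain ⟨w, hwdef⟩ : ∃ w : ℂ → ℂ, w = fun z => Complex.exp (b / 2 * z) := ⟨_, rfl⟩
  obtain ⟨w', hw'def⟩ : ∃ w' : ℂ → ℂ, w' = fun z => Complex.exp (-(b / 2) * z) := ⟨_, rfl⟩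
  have hwdiff : Differentiable ℂ w := by
    rw [hwdef]; exact Differentiable.cexp (by fun_prop)
  have hw'diff : Differentiable ℂ w' := by
    rw [hw'def]; exact Differentiable.cexp (by fun_prop)
  have hww' : ∀ z, w z * w' z = 1 := by
    intro z
    rw [hwdef, hw'def, ← Complex.exp_add, show b / 2 * z + -(b / 2) * z = 0 by ring,
      Complex.exp_zero]
  have hw2 : ∀ z, w z ^ 2 = Complex.exp (b * z) := by
    intro z
    rw [hwdef, exp_cpow]
    congr 1
    push_cast
    ring
  have hw'2 : ∀ z, w' z ^ 2 = Complex.exp (-b * z) := by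
    intro z
    rw [hw'def, exp_cpow]
    congr 1
    push_cast
    ring
  have hw3 : ∀ z, w z ^ 3 = Complex.exp (3 * b / 2 * z) := by
    intro z
    rw [hwdef, exp_cpow]
    congr 1
    push_cast
    ring
  have hw'3 : ∀ z, w' z ^ 3 = Complex.exp (-(3 * b / 2) * z) := by
    intro z
    rw [hw'def, exp_cpow]
    congr 1
    push_cast
    ring
  have hwne : ∀ z, w z ≠ 0 := fun z => by rw [hwdef]; exact Complex.exp_ne_zero _
  -- the key auxiliary functions
  obtain ⟨K, hKdef⟩ : ∃ K : ℂ → ℂ, K = fun z => 3 * b * f z + 2 * deriv f z := ⟨_, rfl⟩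
  have hKd : ∀ z, HasDerivAt K (3 * b * deriv f z + 2 * deriv (deriv f) z) z := by
    intro z
    rw [hKdef]
    exact ((hf z).hasDerivAt.const_mul (3 * b)).add ((hf1 z).hasDerivAt.const_mul 2)
  have hKdiff : Differentiable ℂ K := fun z => (hKd z).differentiableAt
  obtain ⟨s, hsdef⟩ : ∃ s : ℂ → ℂ, s = fun z => K z ^ 2 * Complex.exp (-b * z) := ⟨_, rfl⟩
  obtain ⟨sd, hsddef⟩ : ∃ sd : ℂ → ℂ, sd = fun z =>
    (2 * K z * (3 * b * deriv f z + 2 * deriv (deriv f) z) - b * K z ^ 2) *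
      Complex.exp (-b * z) := ⟨_, rfl⟩
  have hsd : ∀ z, HasDerivAt s (sd z) z := by
    intro z
    rw [hsdef, hsddef]
    have h := ((hKd z).pow 2).mul (hnbEd z)
    refine h.congr_deriv ?_
    simp only [Pi.pow_apply]
    ring
  have hsdiff : Differentiable ℂ s := fun z => (hsd z).differentiableAt
  have hsddiff : Differentiable ℂ sd := by
    rw [hsddef]
    exact (((hKdiff.const_mul 2).mul ((hf1.const_mul (3 * b)).add (hf2.const_mul 2))).sub
      ((hKdiff.pow 2).const_mul b)).mul hexpnb
  -- derivative of the main equation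
  have hd : ∀ z : ℂ, 2 * f z * deriv f z + 2 * a * deriv f z * deriv (deriv f) z
      = b * p₁ * Complex.exp (b * z) - b * p₂ * Complex.exp (-b * z) := by
    intro z
    have hL : HasDerivAt (fun u => f u ^ 2 + a * deriv f u ^ 2)
        (2 * f z * deriv f z + 2 * a * deriv f z * deriv (deriv f) z) z := by
      have h := ((hf z).hasDerivAt.pow 2).add (((hf1 z).hasDerivAt.pow 2).const_mul a)
      refine h.congr_deriv ?_
      ring
    have hR : HasDerivAt (fun u => p₁ * Complex.exp (b * u) + p₂ * Complex.exp (-b * u))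
        (b * p₁ * Complex.exp (b * z) - b * p₂ * Complex.exp (-b * z)) z := by
      have h := ((hbEd z).const_mul p₁).add ((hnbEd z).const_mul p₂)
      refine h.congr_deriv ?_
      ring
    have hfun : (fun u => f u ^ 2 + a * deriv f u ^ 2)
        = fun u => p₁ * Complex.exp (b * u) + p₂ * Complex.exp (-b * u) := funext heq
    rw [hfun] at hL
    exact hL.unique hR
  -- the product relation  2 f g = P + g²  in scaled form
  have hfg : ∀ z, 6 * b * f z * K z
      = 9 * b ^ 2 * (p₁ * Complex.exp (b * z) + p₂ * Complex.exp (-b * z)) + K z ^ 2 := by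
    intro z
    rw [hKdef]
    linear_combination 9 * b ^ 2 * heq z - deriv f z ^ 2 * hab
  -- P is not identically zero
  have hPne : ¬ ∀ z : ℂ, p₁ * Complex.exp (b * z) + p₂ * Complex.exp (-b * z) = 0 := by
    intro h
    have h2 : ∀ z : ℂ, p₂ + p₁ * Complex.exp (2 * b * z) = 0 := by
      intro z
      have h1 := h z
      have h3 := hEE z
      have h4 : p₂ + p₁ * Complex.exp (b * z) ^ 2 = 0 := by
        linear_combination Complex.exp (b * z) * h1 - p₂ * h3
      rwa [exp_cpow, show ((2 : ℕ) : ℂ) * (b * z) = 2 * b * z by push_cast; ring] at h4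
    exact hp₁ (two_freq (mul_ne_zero two_ne_zero hb) h2).2
  -- the star ODE identity
  have hstar : ∀ z, (9 * b ^ 2 * (p₁ + p₂ * Complex.exp (-b * z) ^ 2) - s z) * sd z
      = 2 * b * s z * (18 * b ^ 2 * p₁ - s z) := by
    intro z
    have h1 := heq z
    have h2 := hd z
    have h3 := hEE z
    rw [hsdef, hsddef, hKdef]
    linear_combination
      (-9 * b ^ 2 * (3 * b * f z + 2 * deriv f z) * Complex.exp (-b * z) ^ 2 *
        (4 * deriv (deriv f) z - 9 * b ^ 2 * f z)) * h1 +
      (18 * b ^ 2 * (3 * b * f z + 2 * deriv f z) ^ 2 * Complex.exp (-b * z) ^ 2) * h2 +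
      (9 * b ^ 2 * p₁ * Complex.exp (-b * z) *
        (5 * b * (3 * b * f z + 2 * deriv f z) ^ 2 -
          2 * (3 * b * f z + 2 * deriv f z) * (3 * b * deriv f z + 2 * deriv (deriv f) z))) * h3 +
      ((3 * b * f z + 2 * deriv f z) * Complex.exp (-b * z) ^ 2 *
        (deriv f z ^ 2 * (4 * deriv (deriv f) z - 9 * b ^ 2 * f z) -
          4 * deriv f z * deriv (deriv f) z * (3 * b * f z + 2 * deriv f z))) * hab
  -- the N, D machinery
  obtain ⟨X, hXdef⟩ : ∃ X : ℂ → ℂ, X = fun z => Complex.exp (b * z) ^ 2 := ⟨_, rfl⟩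
  have hXd : ∀ z, HasDerivAt X (2 * b * X z) z := by
    intro z
    rw [hXdef]
    have h := (hbEd z).pow 2
    refine h.congr_deriv ?_
    ring
  have hXdiff : Differentiable ℂ X := fun z => (hXd z).differentiableAt
  obtain ⟨Nn, hNdef⟩ : ∃ Nn : ℂ → ℂ,
    Nn = fun z => (9 * b ^ 2 * p₁ ^ 2 * X z - p₂ * (s z - 9 * b ^ 2 * p₁)) ^ 2 := ⟨_, rfl⟩
  obtain ⟨Nd, hNddef⟩ : ∃ Nd : ℂ → ℂ,
    Nd = fun z => 2 * (9 * b ^ 2 * p₁ ^ 2 * X z - p₂ * (s z - 9 * b ^ 2 * p₁)) *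
      (9 * b ^ 2 * p₁ ^ 2 * (2 * b * X z) - p₂ * sd z) := ⟨_, rfl⟩
  obtain ⟨Dn, hDdef⟩ : ∃ Dn : ℂ → ℂ, Dn = fun z => s z * (s z - 18 * b ^ 2 * p₁) := ⟨_, rfl⟩
  obtain ⟨Dd, hDddef⟩ : ∃ Dd : ℂ → ℂ, Dd = fun z => sd z * (2 * s z - 18 * b ^ 2 * p₁) := ⟨_, rfl⟩
  have hNd : ∀ z, HasDerivAt Nn (Nd z) z := by
    intro z
    rw [hNdef, hNddef]
    have h := (((hXd z).const_mul (9 * b ^ 2 * p₁ ^ 2)).sub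
      (((hsd z).sub_const (9 * b ^ 2 * p₁)).const_mul p₂)).pow 2
    refine h.congr_deriv ?_
    simp only [Pi.sub_apply]
    ring
  have hDd : ∀ z, HasDerivAt Dn (Dd z) z := by
    intro z
    rw [hDdef, hDddef]
    have h := (hsd z).mul ((hsd z).sub_const (18 * b ^ 2 * p₁))
    refine h.congr_deriv ?_
    ring
  have hNndiff : Differentiable ℂ Nn := fun z => (hNd z).differentiableAt
  have hDndiff : Differentiable ℂ Dn := fun z => (hDd z).differentiableAt
  have hNddiff : Differentiable ℂ Nd := by
    rw [hNddef]
    exact (((hXdiff.const_mul _).sub ((hsdiff.sub_const _).const_mul p₂)).const_mul 2).mul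
      (((hXdiff.const_mul _).const_mul _).sub (hsddiff.const_mul p₂))
  have hDddiff : Differentiable ℂ Dd := by
    rw [hDddef]
    exact hsddiff.mul ((hsdiff.const_mul 2).sub_const _)
  -- the conserved-quantity identity
  have hTW : ∀ z, (9 * b ^ 2 * (p₁ + p₂ * Complex.exp (-b * z) ^ 2) - s z) *
      (Nd z * Dn z - Nn z * Dd z) = 0 := by
    intro z
    have h1 := hstar z
    have hxy : Complex.exp (b * z) ^ 2 * Complex.exp (-b * z) ^ 2 = 1 := by
      rw [← mul_pow, hEE z, one_pow]
    rw [hNdef, hNddef, hDdef, hDddef, hXdef]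
    linear_combination
      (-2 * (9 * b ^ 2 * p₁ ^ 2 * Complex.exp (b * z) ^ 2 - p₂ * (s z - 9 * b ^ 2 * p₁)) *
        ((9 * b ^ 2 * p₁ ^ 2 * Complex.exp (b * z) ^ 2 - p₂ * (s z - 9 * b ^ 2 * p₁)) *
          (s z - 9 * b ^ 2 * p₁) + p₂ * s z * (s z - 18 * b ^ 2 * p₁))) * h1 +
      (324 * b ^ 5 * p₁ ^ 2 * p₂ *
        (9 * b ^ 2 * p₁ ^ 2 * Complex.exp (b * z) ^ 2 - p₂ * (s z - 9 * b ^ 2 * p₁)) *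
        s z * (s z - 18 * b ^ 2 * p₁)) * hxy
  -- dichotomy
  have hTdiff : Differentiable ℂ fun z => 9 * b ^ 2 * (p₁ + p₂ * Complex.exp (-b * z) ^ 2) - s z :=
    (((((hexpnb.pow 2).const_mul p₂).const_add p₁).const_mul (9 * b ^ 2))).sub hsdiff
  have hVdiff : Differentiable ℂ fun z => Nd z * Dn z - Nn z * Dd z :=
    (hNddiff.mul hDndiff).sub (hNndiff.mul hDddiff)
  -- s is not identically zero
  have hszero : ¬ ∀ z, s z = 0 := by
    intro h0
    apply hPne
    intro z
    have hKz : K z = 0 := by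
      have h := h0 z
      rw [hsdef] at h
      rcases mul_eq_zero.1 h with h' | h'
      · exact pow_eq_zero_iff two_ne_zero |>.1 h'
      · exact absurd h' (Complex.exp_ne_zero _)
    have h := hfg z
    rw [hKz] at h
    have h2 : 9 * b ^ 2 * (p₁ * Complex.exp (b * z) + p₂ * Complex.exp (-b * z)) = 0 := by
      linear_combination -h
    exact (mul_eq_zero.1 h2).resolve_left hb2
  -- Case 1 : s ≡ 18 b² p₁ produces the first alternative
  have case1 : (∀ z, s z - 18 * b ^ 2 * p₁ = 0) →
      (∃ l₁ l₂ : ℂ, l₂ ^ 2 = 9 / 8 * p₁ ∧ l₁ ^ 2 = p₂ ^ 2 / (8 * p₁) ∧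
        ∀ z : ℂ, f z = l₁ * Complex.exp (-(3 * b / 2) * z) + l₂ * Complex.exp (b / 2 * z)) := by
    intro h18
    have hk2 : ∀ z, (K z * w' z) ^ 2 = 18 * b ^ 2 * p₁ := by
      intro z
      have h := h18 z
      rw [hsdef] at h
      have h2 := hw'2 z
      linear_combination h + K z ^ 2 * h2
    obtain ⟨c, hc⟩ : ∃ c : ℂ, c ^ 2 = 18 * b ^ 2 * p₁ :=
      IsAlgClosed.exists_pow_nat_eq (18 * b ^ 2 * p₁) (by norm_num)
    have h18ne : (18 : ℂ) * b ^ 2 * p₁ ≠ 0 :=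
      mul_ne_zero (mul_ne_zero (by norm_num) (pow_ne_zero 2 hb)) hp₁
    have hfac : ∀ z, (K z * w' z - c) * (K z * w' z + c) = 0 := by
      intro z
      linear_combination hk2 z - hc
    have hkwdiff : Differentiable ℂ fun z => K z * w' z := hKdiff.mul hw'diff
    obtain ⟨c', hc'2, hkc⟩ : ∃ c' : ℂ, c' ^ 2 = 18 * b ^ 2 * p₁ ∧ ∀ z, K z * w' z = c' := by
      rcases entire_mul_zero (hkwdiff.sub_const c) (hkwdiff.add_const c) hfac with h | h
      · exact ⟨c, hc, fun z => by linear_combination h z⟩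
      · exact ⟨-c, by linear_combination hc, fun z => by linear_combination h z⟩
    have hc'ne : c' ≠ 0 := by
      intro h
      rw [h] at hc'2
      exact h18ne (by linear_combination -hc'2)
    have hK1 : ∀ z, K z = c' * w z := by
      intro z
      linear_combination w z * hkc z - K z * hww' z
    refine ⟨3 * b * p₂ / (2 * c'), 9 * b * p₁ / (2 * c'), ?_, ?_, ?_⟩
    · have hl₂ : 2 * c' * (9 * b * p₁ / (2 * c')) = 9 * b * p₁ := by
        field_simp
      have h4 : 4 * c' ^ 2 * (9 * b * p₁ / (2 * c')) ^ 2 = 81 * b ^ 2 * p₁ ^ 2 := by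
        linear_combination (2 * c' * (9 * b * p₁ / (2 * c')) + 9 * b * p₁) * hl₂
      have h5 : 72 * b ^ 2 * p₁ * (9 * b * p₁ / (2 * c')) ^ 2 = 81 * b ^ 2 * p₁ ^ 2 := by
        linear_combination h4 - 4 * (9 * b * p₁ / (2 * c')) ^ 2 * hc'2
      have h72 : (72 : ℂ) * b ^ 2 * p₁ ≠ 0 :=
        mul_ne_zero (mul_ne_zero (by norm_num) (pow_ne_zero 2 hb)) hp₁
      have h6 : 72 * b ^ 2 * p₁ * (9 * b * p₁ / (2 * c')) ^ 2
          = 72 * b ^ 2 * p₁ * (9 / 8 * p₁) := by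
        linear_combination h5
      exact mul_left_cancel₀ h72 h6
    · have hl₁ : 2 * c' * (3 * b * p₂ / (2 * c')) = 3 * b * p₂ := by
        field_simp
      have h4 : 4 * c' ^ 2 * (3 * b * p₂ / (2 * c')) ^ 2 = 9 * b ^ 2 * p₂ ^ 2 := by
        linear_combination (2 * c' * (3 * b * p₂ / (2 * c')) + 3 * b * p₂) * hl₁
      have h5 : 72 * b ^ 2 * p₁ * (3 * b * p₂ / (2 * c')) ^ 2 = 9 * b ^ 2 * p₂ ^ 2 := by
        linear_combination h4 - 4 * (3 * b * p₂ / (2 * c')) ^ 2 * hc'2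
      rw [eq_div_iff (mul_ne_zero (by norm_num) hp₁)]
      have h6 : 9 * b ^ 2 * ((3 * b * p₂ / (2 * c')) ^ 2 * (8 * p₁)) = 9 * b ^ 2 * p₂ ^ 2 := by
        linear_combination h5
      exact mul_left_cancel₀ hb2 h6
    · intro z
      have hl₁ : 2 * c' * (3 * b * p₂ / (2 * c')) = 3 * b * p₂ := by field_simp
      have hl₂ : 2 * c' * (9 * b * p₁ / (2 * c')) = 9 * b * p₁ := by field_simp
      have hcand : 6 * b * c' * w z * ((3 * b * p₂ / (2 * c')) * w' z ^ 3 +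
          (9 * b * p₁ / (2 * c')) * w z)
          = 9 * b ^ 2 * (p₁ * Complex.exp (b * z) + p₂ * Complex.exp (-b * z)) + (c' * w z) ^ 2 := by
        rw [← hw2 z, ← hw'2 z]
        linear_combination (9 * b ^ 2 * p₂ * w' z ^ 2) * hww' z + (3 * b * w z * w' z ^ 3) * hl₁ +
          (3 * b * w z ^ 2) * hl₂ - w z ^ 2 * hc'2
      have hfz := hfg z
      rw [hK1 z] at hfz
      have hne6 : 6 * b * c' * w z ≠ 0 :=
        mul_ne_zero (mul_ne_zero h6b hc'ne) (hwne z)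
      have hkey : (6 * b * c' * w z) * ((3 * b * p₂ / (2 * c')) * w' z ^ 3 +
          (9 * b * p₁ / (2 * c')) * w z) = (6 * b * c' * w z) * f z := by
        linear_combination hcand - hfz
      have hf' := (mul_left_cancel₀ hne6 hkey).symm
      rw [hf', ← hw'3 z, hwdef]
  rcases entire_mul_zero hTdiff hVdiff hTW with hT0 | hW
  · -- T ≡ 0 : impossible
    exfalso
    have hprod : ∀ z, s z * (s z - 18 * b ^ 2 * p₁) = 0 := by
      intro z
      have h := hstar z
      rw [hT0 z, zero_mul] at h
      have h2 : 2 * b * (s z * (s z - 18 * b ^ 2 * p₁)) = 0 := by linear_combination h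
      exact (mul_eq_zero.1 h2).resolve_left (mul_ne_zero two_ne_zero hb)
    rcases entire_mul_zero hsdiff (hsdiff.sub_const _) hprod with h0 | h18
    · exact hszero h0
    · have h2 : ∀ z : ℂ, -p₁ + p₂ * Complex.exp (-(2 * b) * z) = 0 := by
        intro z
        have h := hT0 z
        have h3 := h18 z
        have h4 : 9 * b ^ 2 * (-p₁ + p₂ * Complex.exp (-b * z) ^ 2) = 0 := by
          linear_combination h + h3
        have h5 := (mul_eq_zero.1 h4).resolve_left hb2
        rwa [exp_cpow, show ((2 : ℕ) : ℂ) * (-b * z) = -(2 * b) * z by push_cast; ring] at h5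
      have := (two_freq (neg_ne_zero.2 (mul_ne_zero two_ne_zero hb)) h2).1
      exact hp₁ (by linear_combination -this)
  by_cases hD0 : ∀ z, Dn z = 0
  · -- degenerate case : D ≡ 0
    have hprod : ∀ z, s z * (s z - 18 * b ^ 2 * p₁) = 0 := by
      intro z
      have h := hD0 z
      rwa [hDdef] at h
    rcases entire_mul_zero hsdiff (hsdiff.sub_const _) hprod with h0 | h18
    · exact absurd h0 hszero
    · exact Or.inl (case1 h18)
  push_neg at hD0
  obtain ⟨z₀, hz₀⟩ := hD0
  -- the conserved constant
  obtain ⟨C, hCdef⟩ : ∃ C : ℂ, C = Nn z₀ / Dn z₀ := ⟨_, rfl⟩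
  obtain ⟨M, hMdef⟩ : ∃ M : ℂ → ℂ, M = fun z => Nn z * Dn z₀ - Nn z₀ * Dn z := ⟨_, rfl⟩
  have hMd : ∀ z, HasDerivAt M (Nd z * Dn z₀ - Nn z₀ * Dd z) z := by
    intro z
    rw [hMdef]
    exact ((hNd z).mul_const _).sub ((hDd z).const_mul _)
  have hMdiff : Differentiable ℂ M := fun z => (hMd z).differentiableAt
  have hDndiff' : Differentiable ℂ Dn := hDndiff
  have hwr : ∀ z, deriv M z * Dn z = M z * deriv Dn z := by
    intro z
    rw [(hMd z).deriv, (hDd z).deriv, hMdef]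
    linear_combination Dn z₀ * hW z
  have hM0 := wronskian_zero hMdiff hDndiff' hwr hz₀ (by rw [hMdef]; ring)
  have hNCD : ∀ z, Nn z = C * Dn z := by
    intro z
    rw [hCdef, div_mul_eq_mul_div, eq_div_iff hz₀]
    have h := hM0 z
    rw [hMdef] at h
    linear_combination h
  have hquad : ∀ z, (p₂ ^ 2 - C) * (s z - 9 * b ^ 2 * p₁) ^ 2
      - 18 * b ^ 2 * p₁ ^ 2 * p₂ * Complex.exp (b * z) ^ 2 * (s z - 9 * b ^ 2 * p₁)
      + 81 * b ^ 4 * p₁ ^ 4 * Complex.exp (b * z) ^ 4 + 81 * b ^ 4 * C * p₁ ^ 2 = 0 := by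
    intro z
    have h := hNCD z
    rw [hNdef, hDdef, hXdef] at h
    linear_combination h
  by_cases hC : C = p₂ ^ 2
  · -- Case 2 : second alternative
    right
    have h9bp : (9 : ℂ) * b ^ 2 * p₁ ^ 2 ≠ 0 := mul_ne_zero hb2 (pow_ne_zero 2 hp₁)
    have hu : ∀ z, 2 * p₂ * Complex.exp (b * z) ^ 2 * (s z - 9 * b ^ 2 * p₁)
        = 9 * b ^ 2 * (p₁ ^ 2 * Complex.exp (b * z) ^ 4 + p₂ ^ 2) := by
      intro z
      have h := hquad z
      rw [hC] at h
      have h2 : 9 * b ^ 2 * p₁ ^ 2 * (2 * p₂ * Complex.exp (b * z) ^ 2 * (s z - 9 * b ^ 2 * p₁))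
          = 9 * b ^ 2 * p₁ ^ 2 *
            (9 * b ^ 2 * (p₁ ^ 2 * Complex.exp (b * z) ^ 4 + p₂ ^ 2)) := by
        linear_combination -h
      exact mul_left_cancel₀ h9bp h2
    have e2 : ∀ z, K z ^ 2 = s z * w z ^ 2 := by
      intro z
      rw [hsdef]
      linear_combination (-(K z ^ 2) * Complex.exp (-b * z)) * hw2 z - K z ^ 2 * hEE z
    have hu' : ∀ z, 2 * p₂ * w z ^ 4 * (s z - 9 * b ^ 2 * p₁)
        = 9 * b ^ 2 * (p₁ ^ 2 * w z ^ 8 + p₂ ^ 2) := by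
      intro z
      have h := hu z
      have h2 := hw2 z
      linear_combination h + (2 * p₂ * (s z - 9 * b ^ 2 * p₁) * (w z ^ 2 + Complex.exp (b * z))
        - 9 * b ^ 2 * p₁ ^ 2 * (w z ^ 2 + Complex.exp (b * z)) *
          (w z ^ 4 + Complex.exp (b * z) ^ 2)) * h2
    obtain ⟨B, hB⟩ : ∃ B : ℂ, B ^ 2 = 9 * b ^ 2 * p₂ / 2 :=
      IsAlgClosed.exists_pow_nat_eq (9 * b ^ 2 * p₂ / 2) (by norm_num)
    have hBne : B ≠ 0 := by
      intro h
      rw [h] at hB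
      have : (9 : ℂ) * b ^ 2 * p₂ = 0 := by linear_combination -2 * hB
      exact (mul_ne_zero hb2 hp₂) this
    obtain ⟨A, hAdef⟩ : ∃ A : ℂ, A = 9 * b ^ 2 * p₁ / (2 * B) := ⟨_, rfl⟩
    have hA : 2 * A * B = 9 * b ^ 2 * p₁ := by
      rw [hAdef]
      field_simp
    have hKG : ∀ z, 18 * b ^ 2 * p₂ * w z ^ 4 *
        ((K z - (A * w z ^ 3 + B * w' z)) * (K z + (A * w z ^ 3 + B * w' z))) = 0 := by
      intro z
      linear_combination (18 * b ^ 2 * p₂ * w z ^ 4) * e2 z + (9 * b ^ 2 * w z ^ 2) * hu' z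
        - ((2 * A * B + 9 * b ^ 2 * p₁) * w z ^ 10) * hA + (4 * A ^ 2 * w z ^ 10) * hB
        - (18 * b ^ 2 * p₂ * w z ^ 7 * w' z) * hA - (162 * b ^ 4 * p₁ * p₂ * w z ^ 6) * hww' z
        - (18 * b ^ 2 * p₂ * w z ^ 4 * w' z ^ 2) * hB
        - (81 * b ^ 4 * p₂ ^ 2 * w z ^ 2 * (w z * w' z + 1)) * hww' z
    have hKG' : ∀ z, (K z - (A * w z ^ 3 + B * w' z)) * (K z + (A * w z ^ 3 + B * w' z)) = 0 := by
      intro z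
      have h := hKG z
      have hne : 18 * b ^ 2 * p₂ * w z ^ 4 ≠ 0 :=
        mul_ne_zero (mul_ne_zero (mul_ne_zero (by norm_num) (pow_ne_zero 2 hb)) hp₂)
          (pow_ne_zero 4 (hwne z))
      exact (mul_eq_zero.1 h).resolve_left hne
    have hGdiff : Differentiable ℂ fun z => A * w z ^ 3 + B * w' z :=
      ((hwdiff.pow 3).const_mul A).add (hw'diff.const_mul B)
    obtain ⟨A', B', hA', hB', hKform⟩ : ∃ A' B' : ℂ, 2 * A' * B' = 9 * b ^ 2 * p₁ ∧
        B' ^ 2 = 9 * b ^ 2 * p₂ / 2 ∧ ∀ z, K z = A' * w z ^ 3 + B' * w' z := by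
      rcases entire_mul_zero (hKdiff.sub hGdiff) (hKdiff.add hGdiff) hKG' with h | h
      · exact ⟨A, B, hA, hB, fun z => by have h' : K z - (A * w z ^ 3 + B * w' z) = 0 := h z; linear_combination h'⟩
      · exact ⟨-A, -B, by linear_combination hA, by linear_combination hB,
          fun z => by have h' : K z + (A * w z ^ 3 + B * w' z) = 0 := h z; linear_combination h'⟩
    refine ⟨A' / (6 * b), B' / (2 * b), ?_, ?_, ?_⟩
    · have hl₄ : 2 * b * (B' / (2 * b)) = B' := by field_simp
      have h4 : 4 * b ^ 2 * (B' / (2 * b)) ^ 2 = 9 * b ^ 2 * p₂ / 2 := by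
        linear_combination (2 * b * (B' / (2 * b)) + B') * hl₄ + hB'
      have h5 : 4 * b ^ 2 * (B' / (2 * b)) ^ 2 = 4 * b ^ 2 * (9 / 8 * p₂) := by
        linear_combination h4
      exact mul_left_cancel₀ (mul_ne_zero (by norm_num) (pow_ne_zero 2 hb)) h5
    · have hl₃ : 6 * b * (A' / (6 * b)) = A' := by field_simp
      have h4 : 36 * b ^ 2 * (A' / (6 * b)) ^ 2 = A' ^ 2 := by
        linear_combination (6 * b * (A' / (6 * b)) + A') * hl₃
      have h5 : 648 * b ^ 4 * p₂ * (A' / (6 * b)) ^ 2 = 81 * b ^ 4 * p₁ ^ 2 := by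
        linear_combination 18 * b ^ 2 * p₂ * h4 + (2 * A' * B' + 9 * b ^ 2 * p₁) * hA'
          - 4 * A' ^ 2 * hB'
      rw [eq_div_iff (mul_ne_zero (by norm_num) hp₂)]
      have h81 : (81 : ℂ) * b ^ 4 ≠ 0 := mul_ne_zero (by norm_num) (pow_ne_zero 4 hb)
      have h6 : 81 * b ^ 4 * ((A' / (6 * b)) ^ 2 * (8 * p₂)) = 81 * b ^ 4 * p₁ ^ 2 := by
        linear_combination h5
      exact mul_left_cancel₀ h81 h6
    · have hl₃ : 6 * b * (A' / (6 * b)) = A' := by field_simp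
      have hl₄ : 2 * b * (B' / (2 * b)) = B' := by field_simp
      have hf0 : ∀ z, 6 * b * ((A' / (6 * b)) * w z ^ 3 + (B' / (2 * b)) * w' z) * K z
          = 9 * b ^ 2 * (p₁ * w z ^ 2 + p₂ * w' z ^ 2) + K z ^ 2 := by
        intro z
        have hKz := hKform z
        linear_combination (6 * b * ((A' / (6 * b)) * w z ^ 3 + (B' / (2 * b)) * w' z)
            - (K z + (A' * w z ^ 3 + B' * w' z))) * hKz
          + (A' * w z ^ 6) * hl₃ + (B' * w z ^ 3 * w' z) * hl₃
          + (3 * A' * w z ^ 3 * w' z) * hl₄ + (2 * A' * B' * w z ^ 2) * hww' z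
          + (w z ^ 2) * hA' + 2 * (w' z ^ 2) * hB' + (3 * B' * w' z ^ 2) * hl₄
      have hKzero_or : ∀ z, (f z - ((A' / (6 * b)) * w z ^ 3 + (B' / (2 * b)) * w' z)) * K z = 0 := by
        intro z
        have h1 := hfg z
        have h2 := hf0 z
        have h3 : 6 * b * ((f z - ((A' / (6 * b)) * w z ^ 3 + (B' / (2 * b)) * w' z)) * K z)
            = 0 := by
          linear_combination h1 - h2 - (9 * b ^ 2 * p₁) * hw2 z - (9 * b ^ 2 * p₂) * hw'2 z
        exact (mul_eq_zero.1 h3).resolve_left h6b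
      have hf₀diff : Differentiable ℂ fun z => (A' / (6 * b)) * w z ^ 3 + (B' / (2 * b)) * w' z :=
        ((hwdiff.pow 3).const_mul _).add (hw'diff.const_mul _)
      rcases entire_mul_zero (hf.sub hf₀diff) hKdiff hKzero_or with hffin | hK0
      · intro z
        have h := hffin z
        have hfz : f z = (A' / (6 * b)) * w z ^ 3 + (B' / (2 * b)) * w' z := by
          have h' : f z - ((A' / (6 * b)) * w z ^ 3 + (B' / (2 * b)) * w' z) = 0 := h
          linear_combination h'
        rw [hfz, hw3 z, hw'def]
      · exfalso
        apply hPne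
        intro z
        have h := hfg z
        rw [hK0 z] at h
        have h2 : 9 * b ^ 2 * (p₁ * Complex.exp (b * z) + p₂ * Complex.exp (-b * z)) = 0 := by
          linear_combination -h
        exact (mul_eq_zero.1 h2).resolve_left hb2
  · -- C ≠ p₂ ^ 2 : impossible
    exfalso
    obtain ⟨Wf, hWdef⟩ : ∃ Wf : ℂ → ℂ, Wf = fun z => (p₂ ^ 2 - C) * (s z - 9 * b ^ 2 * p₁)
      - 9 * b ^ 2 * p₁ ^ 2 * p₂ * Complex.exp (b * z) ^ 2 := ⟨_, rfl⟩
    have hW2 : ∀ z, Wf z ^ 2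
        = 81 * b ^ 4 * C * p₁ ^ 2 * (p₁ ^ 2 * Complex.exp (b * z) ^ 4 + (C - p₂ ^ 2)) := by
      intro z
      rw [hWdef]
      linear_combination (p₂ ^ 2 - C) * hquad z
    by_cases hC0 : C = 0
    · -- subcase C = 0
      have hWf0 : ∀ z, Wf z = 0 := by
        intro z
        have h := hW2 z
        rw [hC0] at h
        have : Wf z ^ 2 = 0 := by linear_combination h
        exact pow_eq_zero_iff two_ne_zero |>.1 this
      have hs_form : ∀ z, s z = 9 * b ^ 2 * p₁ + 9 * b ^ 2 * p₁ ^ 2 / p₂ * Complex.exp (b * z) ^ 2 := by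
        intro z
        have h := hWf0 z
        rw [hWdef, hC0] at h
        have h3 : p₂ ^ 2 * s z = p₂ ^ 2 *
            (9 * b ^ 2 * p₁ + 9 * b ^ 2 * p₁ ^ 2 / p₂ * Complex.exp (b * z) ^ 2) := by
          have hp : p₂ ^ 2 * (9 * b ^ 2 * p₁ ^ 2 / p₂) = 9 * b ^ 2 * p₁ ^ 2 * p₂ := by
            rw [← mul_div_assoc, div_eq_iff hp₂]; ring
          linear_combination h - Complex.exp (b * z) ^ 2 * hp
        exact mul_left_cancel₀ (pow_ne_zero 2 hp₂) h3
      obtain ⟨c₀, hc₀⟩ : ∃ c₀ : ℂ, Complex.exp c₀ = -p₂ / p₁ := by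
        have hne : (-p₂ / p₁ : ℂ) ≠ 0 := div_ne_zero (neg_ne_zero.2 hp₂) hp₁
        have : (-p₂ / p₁ : ℂ) ∈ Set.range Complex.exp := by
          rw [Complex.range_exp]
          exact hne
        exact this
      obtain ⟨z₀, hz₀def⟩ : ∃ z₀ : ℂ, z₀ = c₀ / (2 * b) := ⟨_, rfl⟩
      have hX0 : Complex.exp (b * z₀) ^ 2 = -p₂ / p₁ := by
        rw [exp_cpow, show ((2 : ℕ) : ℂ) * (b * z₀) = c₀ by rw [hz₀def]; push_cast; field_simp]
        exact hc₀
      have hs0 : s z₀ = 0 := by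
        rw [hs_form z₀, hX0]
        field_simp
        ring
      have hK0 : K z₀ = 0 := by
        have h := hs0
        rw [hsdef] at h
        rcases mul_eq_zero.1 h with h' | h'
        · exact pow_eq_zero_iff two_ne_zero |>.1 h'
        · exact absurd h' (Complex.exp_ne_zero _)
      have hsd0 : sd z₀ = 0 := by
        simp only [hsddef]
        rw [hK0]
        ring
      have hform : s = fun z => 9 * b ^ 2 * p₁ + 9 * b ^ 2 * p₁ ^ 2 / p₂ * Complex.exp (b * z) ^ 2 :=
        funext hs_form
      have hd2 : HasDerivAt
          (fun z => 9 * b ^ 2 * p₁ + 9 * b ^ 2 * p₁ ^ 2 / p₂ * Complex.exp (b * z) ^ 2)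
          (9 * b ^ 2 * p₁ ^ 2 / p₂ * (2 * b * Complex.exp (b * z₀) ^ 2)) z₀ := by
        have h := (((hbEd z₀).pow 2).const_mul (9 * b ^ 2 * p₁ ^ 2 / p₂)).const_add (9 * b ^ 2 * p₁)
        refine h.congr_deriv ?_
        ring
      have hval : sd z₀ = 9 * b ^ 2 * p₁ ^ 2 / p₂ * (2 * b * Complex.exp (b * z₀) ^ 2) := by
        have h1 := hsd z₀
        rw [hform] at h1
        exact h1.unique hd2
      rw [hsd0, hX0] at hval
      have hval2 : 9 * b ^ 2 * p₁ ^ 2 / p₂ * (2 * b * (-p₂ / p₁)) = -(18 * b ^ 3 * p₁) := by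
        field_simp
        ring
      rw [hval2] at hval
      have h18ne : (18 : ℂ) * b ^ 3 * p₁ ≠ 0 :=
        mul_ne_zero (mul_ne_zero (by norm_num) (pow_ne_zero 3 hb)) hp₁
      exact h18ne (by linear_combination hval)
    · -- subcase C ≠ 0
      obtain ⟨c₀, hc₀⟩ : ∃ c₀ : ℂ, Complex.exp c₀ = (p₂ ^ 2 - C) / p₁ ^ 2 := by
        have hne : ((p₂ ^ 2 - C) / p₁ ^ 2 : ℂ) ≠ 0 :=
          div_ne_zero (sub_ne_zero.2 fun h => hC h.symm) (pow_ne_zero 2 hp₁)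
        have : ((p₂ ^ 2 - C) / p₁ ^ 2 : ℂ) ∈ Set.range Complex.exp := by
          rw [Complex.range_exp]
          exact hne
        exact this
      obtain ⟨z₀', hz₀'def⟩ : ∃ z₀' : ℂ, z₀' = c₀ / (4 * b) := ⟨_, rfl⟩
      have hX4 : Complex.exp (b * z₀') ^ 4 = (p₂ ^ 2 - C) / p₁ ^ 2 := by
        rw [exp_cpow, show ((4 : ℕ) : ℂ) * (b * z₀') = c₀ by
          rw [hz₀'def]; push_cast; field_simp]
        exact hc₀
      have hw20 : Wf z₀' = 0 := by
        have h := hW2 z₀'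
        rw [hX4] at h
        have h2 : Wf z₀' ^ 2 = 0 := by
          rw [h]
          field_simp
          ring
        exact pow_eq_zero_iff two_ne_zero |>.1 h2
      have hWd : HasDerivAt Wf
          ((p₂ ^ 2 - C) * sd z₀' - 9 * b ^ 2 * p₁ ^ 2 * p₂ * (2 * b * Complex.exp (b * z₀') ^ 2))
          z₀' := by
        rw [hWdef]
        have h := (((hsd z₀').sub_const (9 * b ^ 2 * p₁)).const_mul (p₂ ^ 2 - C)).sub
          (((hbEd z₀').pow 2).const_mul (9 * b ^ 2 * p₁ ^ 2 * p₂))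
        refine h.congr_deriv ?_
        ring
      have hW2fun : (fun z => Wf z ^ 2)
          = fun z => 81 * b ^ 4 * C * p₁ ^ 2 * (p₁ ^ 2 * Complex.exp (b * z) ^ 4 + (C - p₂ ^ 2)) :=
        funext hW2
      have h1 : HasDerivAt (fun z => Wf z ^ 2)
          (2 * Wf z₀' * ((p₂ ^ 2 - C) * sd z₀'
            - 9 * b ^ 2 * p₁ ^ 2 * p₂ * (2 * b * Complex.exp (b * z₀') ^ 2))) z₀' := by
        have h := hWd.pow 2
        refine h.congr_deriv ?_
        ring
      have h2 : HasDerivAt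
          (fun z => 81 * b ^ 4 * C * p₁ ^ 2 * (p₁ ^ 2 * Complex.exp (b * z) ^ 4 + (C - p₂ ^ 2)))
          (81 * b ^ 4 * C * p₁ ^ 2 * (p₁ ^ 2 * (4 * b * Complex.exp (b * z₀') ^ 4))) z₀' := by
        have h := ((((hbEd z₀').pow 4).const_mul (p₁ ^ 2)).add_const (C - p₂ ^ 2)).const_mul
          (81 * b ^ 4 * C * p₁ ^ 2)
        refine h.congr_deriv ?_
        ring
      rw [hW2fun] at h1
      have hun := h1.unique h2
      rw [hw20] at hun
      have hY : 81 * b ^ 4 * C * p₁ ^ 2 * (p₁ ^ 2 * (4 * b * Complex.exp (b * z₀') ^ 4)) ≠ 0 := by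
        apply mul_ne_zero
        · exact mul_ne_zero (mul_ne_zero (mul_ne_zero (by norm_num) (pow_ne_zero 4 hb)) hC0)
            (pow_ne_zero 2 hp₁)
        · exact mul_ne_zero (pow_ne_zero 2 hp₁)
            (mul_ne_zero (mul_ne_zero (by norm_num) hb) (pow_ne_zero 4 (Complex.exp_ne_zero _)))
      apply hY
      linear_combination -hun
end

section
/- Let n be an integer with 2 ≤ n ≤ 4 and let a, p₁, p₂, b be nonzero complex constants. Suppose f is an entire function satisfying f(z)ⁿ + a·(f'(z))ⁿ = p₁·e^{bz} + p₂·e^{−bz} for all z ∈ ℂ. Then f and f' have no common zeros; consequently every zero of f is simple (if f(z₀) = 0 then f'(z₀) ≠ 0) and every zero of f' is simple (if f'(z₀) = 0 then f''(z₀) ≠ 0). -/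
open Complex

theorem stmt_10 (n : ℕ) (hn2 : 2 ≤ n) (hn4 : n ≤ 4)
    (a p₁ p₂ b : ℂ) (ha : a ≠ 0) (hp₁ : p₁ ≠ 0) (hp₂ : p₂ ≠ 0) (hb : b ≠ 0)
    (f : ℂ → ℂ) (hf : Differentiable ℂ f)
    (heq : ∀ z : ℂ, f z ^ n + a * (deriv f z) ^ n
        = p₁ * Complex.exp (b * z) + p₂ * Complex.exp (-b * z)) :
    (¬ ∃ z : ℂ, f z = 0 ∧ deriv f z = 0) ∧
    (∀ z₀ : ℂ, f z₀ = 0 → deriv f z₀ ≠ 0) ∧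
    (∀ z₀ : ℂ, deriv f z₀ = 0 → deriv (deriv f) z₀ ≠ 0) := by
  have hc : ContDiff ℂ (⊤ : ℕ∞) f := hf.contDiff
  have hc1 : ContDiff ℂ (⊤ : ℕ∞) (deriv f) := (contDiff_infty_iff_deriv.mp hc).2
  have hd1 : Differentiable ℂ (deriv f) := hc1.differentiable (by simp)
  have hd2 : Differentiable ℂ (deriv (deriv f)) :=
    ((contDiff_infty_iff_deriv.mp hc1).2).differentiable (by simp)
  have e1 : ∀ z : ℂ, HasDerivAt (fun z => Complex.exp (b * z)) (Complex.exp (b * z) * b) z := by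
    intro z
    simpa using ((hasDerivAt_id z).const_mul b).cexp
  have e2 : ∀ z : ℂ, HasDerivAt (fun z => Complex.exp (-b * z)) (Complex.exp (-b * z) * (-b)) z := by
    intro z
    simpa using ((hasDerivAt_id z).const_mul (-b)).cexp
  -- first derivative of the identity
  have h1 : ∀ z : ℂ, (n : ℂ) * f z ^ (n - 1) * deriv f z
      + a * ((n : ℂ) * deriv f z ^ (n - 1) * deriv (deriv f) z)
      = p₁ * (Complex.exp (b * z) * b) + p₂ * (Complex.exp (-b * z) * (-b)) := by
    intro z
    have hL : HasDerivAt (fun z => f z ^ n + a * (deriv f z) ^ n)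
        ((n : ℂ) * f z ^ (n - 1) * deriv f z
          + a * ((n : ℂ) * deriv f z ^ (n - 1) * deriv (deriv f) z)) z := by
      have t1 := (hf z).hasDerivAt.pow n
      have t2 := (((hd1 z).hasDerivAt.pow n).const_mul a)
      exact t1.add t2
    have hR : HasDerivAt (fun z => p₁ * Complex.exp (b * z) + p₂ * Complex.exp (-b * z))
        (p₁ * (Complex.exp (b * z) * b) + p₂ * (Complex.exp (-b * z) * (-b))) z :=
      ((e1 z).const_mul p₁).add ((e2 z).const_mul p₂)
    have hfun : (fun z => f z ^ n + a * (deriv f z) ^ n)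
        = fun z => p₁ * Complex.exp (b * z) + p₂ * Complex.exp (-b * z) := funext heq
    rw [hfun] at hL
    exact hL.unique hR
  -- second derivative of the identity
  have h2 : ∀ z : ℂ,
      ((n : ℂ) * (↑(n - 1) * f z ^ (n - 1 - 1) * deriv f z)) * deriv f z
        + ((n : ℂ) * f z ^ (n - 1)) * deriv (deriv f) z
      + a * (((n : ℂ) * (↑(n - 1) * deriv f z ^ (n - 1 - 1) * deriv (deriv f) z)) * deriv (deriv f) z
        + ((n : ℂ) * deriv f z ^ (n - 1)) * deriv (deriv (deriv f)) z)
      = p₁ * (Complex.exp (b * z) * b * b) + p₂ * (Complex.exp (-b * z) * (-b) * (-b)) := by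
    intro z
    have hu : HasDerivAt (fun y => (n : ℂ) * f y ^ (n - 1))
        ((n : ℂ) * (↑(n - 1) * f z ^ (n - 1 - 1) * deriv f z)) z :=
      ((hf z).hasDerivAt.pow (n - 1)).const_mul (n : ℂ)
    have hv : HasDerivAt (fun y => (n : ℂ) * deriv f y ^ (n - 1))
        ((n : ℂ) * (↑(n - 1) * deriv f z ^ (n - 1 - 1) * deriv (deriv f) z)) z :=
      ((hd1 z).hasDerivAt.pow (n - 1)).const_mul (n : ℂ)
    have hL : HasDerivAt (fun z => (n : ℂ) * f z ^ (n - 1) * deriv f z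
        + a * ((n : ℂ) * deriv f z ^ (n - 1) * deriv (deriv f) z))
        (((n : ℂ) * (↑(n - 1) * f z ^ (n - 1 - 1) * deriv f z)) * deriv f z
          + ((n : ℂ) * f z ^ (n - 1)) * deriv (deriv f) z
        + a * (((n : ℂ) * (↑(n - 1) * deriv f z ^ (n - 1 - 1) * deriv (deriv f) z)) * deriv (deriv f) z
          + ((n : ℂ) * deriv f z ^ (n - 1)) * deriv (deriv (deriv f)) z)) z :=
      (hu.mul (hd1 z).hasDerivAt).add ((hv.mul (hd2 z).hasDerivAt).const_mul a)
    have hR : HasDerivAt (fun z => p₁ * (Complex.exp (b * z) * b) + p₂ * (Complex.exp (-b * z) * (-b)))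
        (p₁ * (Complex.exp (b * z) * b * b) + p₂ * (Complex.exp (-b * z) * (-b) * (-b))) z :=
      (((e1 z).mul_const b).const_mul p₁).add (((e2 z).mul_const (-b)).const_mul p₂)
    have hfun : (fun z => (n : ℂ) * f z ^ (n - 1) * deriv f z
        + a * ((n : ℂ) * deriv f z ^ (n - 1) * deriv (deriv f) z))
        = fun z => p₁ * (Complex.exp (b * z) * b) + p₂ * (Complex.exp (-b * z) * (-b)) :=
      funext h1
    rw [hfun] at hL
    exact hL.unique hR
  have hn1 : n - 1 ≠ 0 := by omega
  have hn0 : n ≠ 0 := by omega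
  -- Part 1: no common zeros
  have part1 : ¬ ∃ z : ℂ, f z = 0 ∧ deriv f z = 0 := by
    rintro ⟨z, hfz, hfz'⟩
    have h0 := heq z
    rw [hfz, hfz', zero_pow hn0, mul_zero, add_zero] at h0
    have h0' := h1 z
    rw [hfz, hfz', zero_pow hn1] at h0'
    simp only [mul_zero, zero_mul, add_zero] at h0'
    -- h0 : 0 = p₁ e + p₂ e', h0' : 0 = p₁ e b - p₂ e' b
    have key : p₁ * Complex.exp (b * z) = 0 := by
      have h3 : (p₁ * Complex.exp (b * z)) * (2 * b) = 0 := by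
        linear_combination (-b) * h0 - h0'
      rcases mul_eq_zero.mp h3 with h | h
      · exact h
      · exact absurd h (by simp [hb])
    exact (mul_ne_zero hp₁ (Complex.exp_ne_zero _)) key
  refine ⟨part1, fun z₀ h0 h1' => part1 ⟨z₀, h0, h1'⟩, ?_⟩
  -- Part 3: zeros of f' are simple
  intro z₀ hfz' hfz''
  have ha1 := h1 z₀
  rw [hfz', hfz'', zero_pow hn1] at ha1
  simp only [mul_zero, zero_mul, add_zero] at ha1
  -- ha1 : 0 = p₁ e b + p₂ e' (-b)
  have ha2 := h2 z₀
  rw [hfz', hfz'', zero_pow hn1] at ha2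
  simp only [mul_zero, zero_mul, add_zero, zero_add] at ha2
  -- ha2 : 0 = p₁ e b b + p₂ e' b b
  have key : p₁ * Complex.exp (b * z₀) = 0 := by
    have : (p₁ * Complex.exp (b * z₀)) * (2 * b * b) = 0 := by
      linear_combination (-b) * ha1 - ha2
    rcases mul_eq_zero.mp this with h | h
    · exact h
    · exact absurd h (by simp [hb])
  exact (mul_ne_zero hp₁ (Complex.exp_ne_zero _)) key
end

section
/- Let a, p₁, p₂, b be nonzero complex constants with 9ab² = −4. If f is an entire function satisfying f(z)² + a·(f'(z))² = p₁·e^{bz} + p₂·e^{−bz} for all z ∈ ℂ, then there exists ε ∈ {1, −1} such that 3b²·f(z) − 4·f''(z) = 4εb·f'(z) for all z ∈ ℂ. -/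
open Complex Filter Set

lemma zero_of_mul_zero {φ ψ : ℂ → ℂ} (hψ : Differentiable ℂ ψ) (hφc : Continuous φ)
    (hz : ∀ z, φ z * ψ z = 0) {z₀ : ℂ} (hφ0 : φ z₀ ≠ 0) : ∀ z, ψ z = 0 := by
  have hev : ψ =ᶠ[nhds z₀] 0 := by
    filter_upwards [hφc.continuousAt.eventually_ne hφ0] with w hw
    exact (mul_eq_zero.mp (hz w)).resolve_left hw
  have hA : AnalyticOnNhd ℂ ψ Set.univ := analyticOnNhd_univ_iff_differentiable.mpr hψ
  have h0 := hA.eqOn_zero_of_preconnected_of_eventuallyEq_zero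
    isPreconnected_univ (Set.mem_univ z₀) hev
  exact fun z => h0 (Set.mem_univ z)

lemma deriv_continuous_of_entire {M : ℂ → ℂ} (hM : Differentiable ℂ M) :
    Continuous (deriv M) := by
  have : AnalyticOnNhd ℂ M Set.univ := analyticOnNhd_univ_iff_differentiable.mpr hM
  exact (analyticOnNhd_univ_iff_differentiable.mp this.deriv).continuous

lemma wronskian_prop {N M : ℂ → ℂ} (hN : Differentiable ℂ N) (hM : Differentiable ℂ M)
    (h : ∀ z, deriv N z * M z = N z * deriv M z) {z₀ : ℂ} (hMz : M z₀ ≠ 0) :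
    ∃ c : ℂ, ∀ z, N z = c * M z := by
  refine ⟨N z₀ / M z₀, ?_⟩
  set c : ℂ := N z₀ / M z₀ with hc
  set D : ℂ → ℂ := fun z => N z - c * M z with hD
  have hDdiff : Differentiable ℂ D := hN.sub (hM.const_mul c)
  have hDz₀ : D z₀ = 0 := by
    simp only [hD, hc]; field_simp; ring
  have hDderiv : ∀ z, deriv D z = deriv N z - c * deriv M z := by
    intro z
    simp only [hD]
    rw [deriv_fun_sub (hN z) ((hM z).const_mul c), deriv_const_mul c (hM z)]
  have hDrel : ∀ z, deriv D z * M z = D z * deriv M z := by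
    intro z
    rw [hDderiv z]
    simp only [hD]
    linear_combination h z
  have hDA : AnalyticOnNhd ℂ D Set.univ := analyticOnNhd_univ_iff_differentiable.mpr hDdiff
  suffices hzero : ∀ z, D z = 0 by
    intro z
    have h0 := hzero z
    simp only [hD] at h0
    linear_combination h0
  by_cases hev : ∀ᶠ z in nhds z₀, D z = 0
  · have h0 := hDA.eqOn_zero_of_preconnected_of_eventuallyEq_zero
      isPreconnected_univ (Set.mem_univ z₀) hev
    exact fun z => h0 (Set.mem_univ z)
  · exfalso
    have hAz : AnalyticAt ℂ D z₀ := hDA z₀ (Set.mem_univ z₀)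
    have horder : analyticOrderAt D z₀ ≠ ⊤ := by
      intro htop
      exact hev (analyticOrderAt_eq_top.mp htop)
    obtain ⟨n, hn⟩ := WithTop.ne_top_iff_exists.mp horder
    obtain ⟨g, hg, hgz, hevD⟩ := hAz.analyticOrderAt_eq_natCast.mp hn.symm
    -- n ≥ 1
    obtain ⟨m, rfl⟩ : ∃ m, n = m + 1 := by
      cases n with
      | zero =>
        exfalso
        have h00 := hevD.self_of_nhds
        simp only [sub_self, pow_zero, one_smul] at h00
        exact hgz (h00 ▸ hDz₀)
      | succ m => exact ⟨m, rfl⟩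
    set K : ℂ → ℂ := fun z =>
      (((m : ℂ) + 1) * g z + (z - z₀) * deriv g z) * M z - (z - z₀) * g z * deriv M z with hK
    have hEv1 : ∀ᶠ z in nhds z₀, D z = (z - z₀) ^ (m + 1) * g z := by
      filter_upwards [hevD] with z hz
      simpa [smul_eq_mul] using hz
    have hEv2 : deriv D =ᶠ[nhds z₀]
        deriv (fun w => (w - z₀) ^ (m + 1) * g w) := Filter.EventuallyEq.deriv hEv1
    have hEv4 : ∀ᶠ z in nhds z₀, deriv (fun w => (w - z₀) ^ (m + 1) * g w) z
        = (z - z₀) ^ m * (((m : ℂ) + 1) * g z + (z - z₀) * deriv g z) := by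
      filter_upwards [hg.eventually_analyticAt] with z hz
      have h1 : HasDerivAt (fun w => (w - z₀) ^ (m + 1) * g w)
          ((((m : ℕ) + 1 : ℕ) * (z - z₀) ^ m * 1) * g z + (z - z₀) ^ (m + 1) * deriv g z) z :=
        HasDerivAt.mul (((hasDerivAt_id z).sub_const z₀).pow (m + 1))
          hz.differentiableAt.hasDerivAt
      rw [h1.deriv]
      push_cast
      ring
    have hKpunct : ∀ᶠ z in nhdsWithin z₀ {z₀}ᶜ, K z = 0 := by
      filter_upwards [hEv1.filter_mono nhdsWithin_le_nhds,
        hEv2.filter_mono nhdsWithin_le_nhds,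
        hEv4.filter_mono nhdsWithin_le_nhds, self_mem_nhdsWithin] with z h1 h2 h4 hzne
      have hzz : (z - z₀) ≠ 0 := sub_ne_zero.mpr hzne
      have hrel := hDrel z
      rw [h2, h4, h1] at hrel
      have hpow : (z - z₀) ^ m ≠ 0 := pow_ne_zero _ hzz
      apply mul_left_cancel₀ hpow
      simp only [hK]
      rw [mul_zero]
      linear_combination hrel
    have hgderiv : ContinuousAt (deriv g) z₀ := by
      have h1 : AnalyticAt ℂ (fderiv ℂ g) z₀ := hg.fderiv
      have h2 : ContinuousAt (fun z => fderiv ℂ g z 1) z₀ :=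
        ((ContinuousLinearMap.apply ℂ ℂ (1 : ℂ)).continuous.continuousAt).comp h1.continuousAt
      have h3 : (fun z => fderiv ℂ g z 1) = deriv g := by
        funext z; rw [fderiv_apply_one_eq_deriv]
      rwa [h3] at h2
    have hKcont : ContinuousAt K z₀ := by
      simp only [hK]
      exact ((((continuousAt_const.mul hg.continuousAt).add
        (((continuousAt_id.sub continuousAt_const)).mul hgderiv)).mul
          hM.continuous.continuousAt).sub
        (((continuousAt_id.sub continuousAt_const).mul hg.continuousAt).mul
          (deriv_continuous_of_entire hM).continuousAt))
    have hKz₀ : K z₀ = 0 := by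
      have t1 : Filter.Tendsto K (nhdsWithin z₀ {z₀}ᶜ) (nhds (K z₀)) :=
        hKcont.continuousWithinAt
      have t2 : Filter.Tendsto K (nhdsWithin z₀ {z₀}ᶜ) (nhds 0) :=
        (tendsto_congr' hKpunct).mpr tendsto_const_nhds
      exact tendsto_nhds_unique t1 t2
    simp only [hK, sub_self, zero_mul, mul_zero, add_zero, sub_zero] at hKz₀
    rcases mul_eq_zero.mp hKz₀ with h' | h'
    · rcases mul_eq_zero.mp h' with h'' | h''
      · exact (Nat.cast_add_one_ne_zero m) h''
      · exact hgz h''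
    · exact hMz h'

theorem stmt_14 (a p₁ p₂ b : ℂ) (ha : a ≠ 0) (hp₁ : p₁ ≠ 0) (hp₂ : p₂ ≠ 0) (hb : b ≠ 0)
    (hab : 9 * a * b ^ 2 = -4)
    (f : ℂ → ℂ) (hf : Differentiable ℂ f)
    (heq : ∀ z : ℂ, f z ^ 2 + a * (deriv f z) ^ 2
        = p₁ * Complex.exp (b * z) + p₂ * Complex.exp (-b * z)) :
    ∃ ε : ℂ, (ε = 1 ∨ ε = -1) ∧
      ∀ z : ℂ, 3 * b ^ 2 * f z - 4 * deriv (deriv f) z = 4 * ε * b * deriv f z := by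
  set d1 := deriv f with hd1def
  set d2 := deriv d1 with hd2def
  have hfA : AnalyticOnNhd ℂ f Set.univ := analyticOnNhd_univ_iff_differentiable.mpr hf
  have hd1diff : Differentiable ℂ d1 := analyticOnNhd_univ_iff_differentiable.mp hfA.deriv
  have hd1A : AnalyticOnNhd ℂ d1 Set.univ := hfA.deriv
  have hd2diff : Differentiable ℂ d2 := analyticOnNhd_univ_iff_differentiable.mp hd1A.deriv
  have hfd : ∀ z, HasDerivAt f (d1 z) z := fun z => (hf z).hasDerivAt
  have hd1d : ∀ z, HasDerivAt d1 (d2 z) z := fun z => (hd1diff z).hasDerivAt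
  -- basic exp derivative facts
  have hX : ∀ z : ℂ, HasDerivAt (fun w => Complex.exp (b * w)) (b * Complex.exp (b * z)) z := by
    intro z
    have h := ((hasDerivAt_id z).const_mul b).cexp
    refine h.congr_deriv ?_
    simp only [id_eq]
    ring
  have hY : ∀ z : ℂ, HasDerivAt (fun w => Complex.exp (-b * w)) (-b * Complex.exp (-b * z)) z := by
    intro z
    have h := ((hasDerivAt_id z).const_mul (-b)).cexp
    refine h.congr_deriv ?_
    simp only [id_eq]
    ring
  have hXne : ∀ z : ℂ, Complex.exp (b * z) ≠ 0 := fun z => Complex.exp_ne_zero _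
  have hYne : ∀ z : ℂ, Complex.exp (-b * z) ≠ 0 := fun z => Complex.exp_ne_zero _
  have hxy : ∀ z : ℂ, Complex.exp (b * z) * Complex.exp (-b * z) = 1 := by
    intro z
    rw [← Complex.exp_add, show b * z + -b * z = 0 by ring, Complex.exp_zero]
  -- derivative of heq
  have h2 : ∀ z, 2 * f z * d1 z + a * (2 * d1 z * d2 z)
      = b * p₁ * Complex.exp (b * z) - b * p₂ * Complex.exp (-b * z) := by
    intro z
    have hL : HasDerivAt (fun w => f w ^ 2 + a * d1 w ^ 2)
        (2 * f z * d1 z + a * (2 * d1 z * d2 z)) z := by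
      have h := ((hfd z).pow 2).add (((hd1d z).pow 2).const_mul a)
      refine h.congr_deriv ?_
      push_cast
      ring
    have hR : HasDerivAt (fun w => p₁ * Complex.exp (b * w) + p₂ * Complex.exp (-b * w))
        (b * p₁ * Complex.exp (b * z) - b * p₂ * Complex.exp (-b * z)) z := by
      have h := ((hX z).const_mul p₁).add ((hY z).const_mul p₂)
      refine h.congr_deriv ?_
      ring
    have hfun : (fun w => f w ^ 2 + a * d1 w ^ 2)
        = (fun w => p₁ * Complex.exp (b * w) + p₂ * Complex.exp (-b * w)) := funext heq
    rw [hfun] at hL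
    exact hL.unique hR
  -- the two key auxiliary functions
  set F : ℂ → ℂ := fun z => (3 * b * f z + 2 * d1 z) ^ 2
      - 18 * b ^ 2 * p₁ * Complex.exp (b * z) with hFdef
  set G : ℂ → ℂ := fun z => (3 * b * f z - 2 * d1 z) ^ 2
      - 18 * b ^ 2 * p₂ * Complex.exp (-b * z) with hGdef
  set Fp : ℂ → ℂ := fun z => 2 * (3 * b * f z + 2 * d1 z) * (3 * b * d1 z + 2 * d2 z)
      - 18 * b ^ 3 * p₁ * Complex.exp (b * z) with hFpdef
  set Gp : ℂ → ℂ := fun z => 2 * (3 * b * f z - 2 * d1 z) * (3 * b * d1 z - 2 * d2 z)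
      + 18 * b ^ 3 * p₂ * Complex.exp (-b * z) with hGpdef
  have hFd : ∀ z, HasDerivAt F (Fp z) z := by
    intro z
    have h := ((((hfd z).const_mul (3 * b)).add ((hd1d z).const_mul 2)).pow 2).sub
      ((hX z).const_mul (18 * b ^ 2 * p₁))
    refine h.congr_deriv ?_
    push_cast [Pi.add_apply, Pi.sub_apply, Pi.pow_apply, Pi.mul_apply]
    ring
  have hGd : ∀ z, HasDerivAt G (Gp z) z := by
    intro z
    have h := ((((hfd z).const_mul (3 * b)).sub ((hd1d z).const_mul 2)).pow 2).sub
      ((hY z).const_mul (18 * b ^ 2 * p₂))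
    refine h.congr_deriv ?_
    push_cast [Pi.add_apply, Pi.sub_apply, Pi.pow_apply, Pi.mul_apply]
    ring
  have hFdiff : Differentiable ℂ F := fun z => (hFd z).differentiableAt
  have hGdiff : Differentiable ℂ G := fun z => (hGd z).differentiableAt
  have hFpdiff : Differentiable ℂ Fp := by
    rw [hFpdef]
    fun_prop
  have hGpdiff : Differentiable ℂ Gp := by
    rw [hGpdef]
    fun_prop
  -- the key algebraic identity, multiplied by d1
  have hkey : ∀ z, d1 z * (Fp z * G z - F z * Gp z - 4 * b * F z * G z) = 0 := by
    intro z
    have H1 := heq z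
    have H2 := h2 z
    have hxyz := hxy z
    simp only [hFdef, hGdef, hFpdef, hGpdef]
    set A := f z
    set B := d1 z
    set Cc := d2 z
    set X := Complex.exp (b * z)
    set Y := Complex.exp (-b * z)
    have e1 : (3 * b * A + 2 * B) * (3 * b * A - 2 * B) = 9 * b ^ 2 * (p₁ * X + p₂ * Y) := by
      linear_combination 9 * b ^ 2 * H1 - B ^ 2 * hab
    have e2 : (3 * b * B + 2 * Cc) * (3 * b * A - 2 * B)
        + (3 * b * A + 2 * B) * (3 * b * B - 2 * Cc)
        = 9 * b ^ 3 * (p₁ * X - p₂ * Y) := by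
      linear_combination 9 * b ^ 2 * H2 - 2 * B * Cc * hab
    have j1 : 4 * B * (3 * b * B + 2 * Cc)
        = 6 * b * B * (3 * b * A + 2 * B) - 9 * b ^ 3 * (p₁ * X - p₂ * Y) := by
      linear_combination -e2
    have j2 : 4 * B * (3 * b * B - 2 * Cc)
        = 9 * b ^ 3 * (p₁ * X - p₂ * Y) - 6 * b * B * (3 * b * A - 2 * B) := by
      linear_combination e2
    have kF : 4 * B * (2 * (3 * b * A + 2 * B) * (3 * b * B + 2 * Cc) - 18 * b ^ 3 * p₁ * X)
        = b * (3 * (3 * b * A + 2 * B) - (3 * b * A - 2 * B))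
          * ((3 * b * A + 2 * B) ^ 2 - 18 * b ^ 2 * p₁ * X) := by
      linear_combination (2 * (3 * b * A + 2 * B)) * j1 - (2 * b * (3 * b * A + 2 * B)) * e1
    have kG : 4 * B * (2 * (3 * b * A - 2 * B) * (3 * b * B - 2 * Cc) + 18 * b ^ 3 * p₂ * Y)
        = b * (3 * (3 * b * A - 2 * B) - (3 * b * A + 2 * B))
          * ((3 * b * A - 2 * B) ^ 2 - 18 * b ^ 2 * p₂ * Y) := by
      linear_combination (2 * (3 * b * A - 2 * B)) * j2 - (2 * b * (3 * b * A - 2 * B)) * e1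
    linear_combination (((3 * b * A - 2 * B) ^ 2 - 18 * b ^ 2 * p₂ * Y) / 4) * kF
      - (((3 * b * A + 2 * B) ^ 2 - 18 * b ^ 2 * p₁ * X) / 4) * kG
  -- d1 is not identically zero
  have hd1ne : ∃ z, d1 z ≠ 0 := by
    by_contra hcon
    push_neg at hcon
    have hd1fun : d1 = fun _ => (0 : ℂ) := funext hcon
    have hd20 : ∀ z, d2 z = 0 := by
      intro z
      rw [hd2def, hd1fun]
      simp
    have hz : ∀ z, (0 : ℂ) = b * p₁ * Complex.exp (b * z) - b * p₂ * Complex.exp (-b * z) := by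
      intro z
      have h := h2 z
      rw [hcon z, hd20 z] at h
      linear_combination h
    have h0 := hz 0
    simp only [mul_zero, Complex.exp_zero, mul_one, neg_zero] at h0
    set z₁ : ℂ := (2 * b)⁻¹ * Complex.log (-1) with hz₁def
    have harg : (2 : ℂ) * (b * z₁) = Complex.log (-1) := by
      rw [hz₁def]
      field_simp
    have hsq : Complex.exp (b * z₁) ^ 2 = -1 := by
      rw [← Complex.exp_nat_mul]
      push_cast
      rw [harg, Complex.exp_log (by norm_num)]
    have h1 := hz z₁
    have hmul := congrArg (fun t => t * Complex.exp (b * z₁)) h1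
    rw [zero_mul] at hmul
    have hxyz := hxy z₁
    have hcontr : b * p₁ * (-1) - b * p₂ = 0 := by
      linear_combination -hmul - b * p₁ * hsq + b * p₂ * hxyz
    have hfin : b * (p₁ + p₂) = 0 := by linear_combination -hcontr
    have hps : p₁ + p₂ = 0 := by
      rcases mul_eq_zero.mp hfin with h' | h'
      · exact absurd h' hb
      · exact h'
    have hps2 : p₁ - p₂ = 0 := by
      have hb2 : b * (p₁ - p₂) = 0 := by linear_combination -h0
      rcases mul_eq_zero.mp hb2 with h' | h'
      · exact absurd h' hb
      · exact h'
    have : p₁ = 0 := by linear_combination (hps + hps2) / 2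
    exact hp₁ this
  obtain ⟨zd, hzd⟩ := hd1ne
  -- main identity
  have hW : ∀ z, Fp z * G z - F z * Gp z - 4 * b * F z * G z = 0 := by
    have hdiff : Differentiable ℂ (fun z => Fp z * G z - F z * Gp z - 4 * b * F z * G z) :=
      ((hFpdiff.mul hGdiff).sub (hFdiff.mul hGpdiff)).sub
        (((hFdiff.const_mul (4 * b)).mul hGdiff))
    exact zero_of_mul_zero hdiff hd1diff.continuous hkey hzd
  -- Case analysis
  by_cases hGzero : ∀ z, G z = 0
  · -- ε = -1
    refine ⟨-1, Or.inr rfl, ?_⟩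
    intro z
    have hGfun : G = fun _ => (0 : ℂ) := funext hGzero
    have hGp0 : Gp z = 0 := by
      have h := (hGd z).deriv
      rw [hGfun] at h
      simpa using h.symm
    have hG0 := hGzero z
    simp only [hGdef] at hG0
    simp only [hGpdef] at hGp0
    have hVne : 3 * b * f z - 2 * d1 z ≠ 0 := by
      intro hV0
      rw [hV0] at hG0
      have : 18 * b ^ 2 * p₂ * Complex.exp (-b * z) ≠ 0 := by
        apply mul_ne_zero
        apply mul_ne_zero
        apply mul_ne_zero
        · norm_num
        · exact pow_ne_zero _ hb
        · exact hp₂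
        · exact hYne z
      exact this (by linear_combination -hG0)
    have hVeq : (3 * b * f z - 2 * d1 z)
        * (2 * (3 * b * d1 z - 2 * d2 z) + b * (3 * b * f z - 2 * d1 z)) = 0 := by
      linear_combination hGp0 + b * hG0
    rcases mul_eq_zero.mp hVeq with h' | h'
    · exact absurd h' hVne
    · linear_combination h'
  by_cases hFzero : ∀ z, F z = 0
  · -- ε = 1
    refine ⟨1, Or.inl rfl, ?_⟩
    intro z
    have hFfun : F = fun _ => (0 : ℂ) := funext hFzero
    have hFp0 : Fp z = 0 := by
      have h := (hFd z).deriv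
      rw [hFfun] at h
      simpa using h.symm
    have hF0 := hFzero z
    simp only [hFdef] at hF0
    simp only [hFpdef] at hFp0
    have hUne : 3 * b * f z + 2 * d1 z ≠ 0 := by
      intro hU0
      rw [hU0] at hF0
      have : 18 * b ^ 2 * p₁ * Complex.exp (b * z) ≠ 0 := by
        apply mul_ne_zero
        apply mul_ne_zero
        apply mul_ne_zero
        · norm_num
        · exact pow_ne_zero _ hb
        · exact hp₁
        · exact hXne z
      exact this (by linear_combination -hF0)
    have hUeq : (3 * b * f z + 2 * d1 z)
        * (2 * (3 * b * d1 z + 2 * d2 z) - b * (3 * b * f z + 2 * d1 z)) = 0 := by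
      linear_combination hFp0 - b * hF0
    rcases mul_eq_zero.mp hUeq with h' | h'
    · exact absurd h' hUne
    · linear_combination -h'
  -- Case C : contradiction
  exfalso
  push_neg at hGzero hFzero
  obtain ⟨zG, hzG⟩ := hGzero
  obtain ⟨zF, hzF⟩ := hFzero
  -- Wronskian argument : F = c * exp(4bz) * G
  set N : ℂ → ℂ := fun z => Complex.exp (-b * z) ^ 2 * F z with hNdef
  set M : ℂ → ℂ := fun z => Complex.exp (b * z) ^ 2 * G z with hMdef
  have hNd : ∀ z, HasDerivAt N (Complex.exp (-b * z) ^ 2 * (Fp z - 2 * b * F z)) z := by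
    intro z
    have h := ((hY z).pow 2).mul (hFd z)
    refine h.congr_deriv ?_
    push_cast [Pi.add_apply, Pi.sub_apply, Pi.pow_apply, Pi.mul_apply]
    ring
  have hMd : ∀ z, HasDerivAt M (Complex.exp (b * z) ^ 2 * (Gp z + 2 * b * G z)) z := by
    intro z
    have h := ((hX z).pow 2).mul (hGd z)
    refine h.congr_deriv ?_
    push_cast [Pi.add_apply, Pi.sub_apply, Pi.pow_apply, Pi.mul_apply]
    ring
  have hNdiff : Differentiable ℂ N := fun z => (hNd z).differentiableAt
  have hMdiff : Differentiable ℂ M := fun z => (hMd z).differentiableAt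
  have hwr : ∀ z, deriv N z * M z = N z * deriv M z := by
    intro z
    rw [(hNd z).deriv, (hMd z).deriv]
    simp only [hNdef, hMdef]
    linear_combination Complex.exp (b * z) ^ 2 * Complex.exp (-b * z) ^ 2 * hW z
  have hMzG : M zG ≠ 0 := by
    simp only [hMdef]
    exact mul_ne_zero (pow_ne_zero _ (hXne zG)) hzG
  obtain ⟨c, hc⟩ := wronskian_prop hNdiff hMdiff hwr hMzG
  have hcne : c ≠ 0 := by
    intro hc0
    apply hzF
    have h := hc zF
    rw [hc0, zero_mul] at h
    simp only [hNdef] at h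
    exact (mul_eq_zero.mp h).resolve_left (pow_ne_zero _ (hYne zF))
  have hFC : ∀ z, F z = c * Complex.exp (b * z) ^ 4 * G z := by
    intro z
    have h := hc z
    simp only [hNdef, hMdef] at h
    have hxyz := hxy z
    linear_combination Complex.exp (b * z) ^ 2 * h
      - F z * (Complex.exp (b * z) * Complex.exp (-b * z) + 1) * hxyz
  -- the square identity
  set lam : ℂ := (9 * b ^ 2 * p₁) ^ 2 + c * (9 * b ^ 2 * p₂) ^ 2 with hlamdef
  set Wf : ℂ → ℂ := fun z => 2 * c * (Complex.exp (b * z) ^ 4 * (3 * b * f z - 2 * d1 z) ^ 2)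
      + 18 * b ^ 2 * p₁ * Complex.exp (b * z)
      - 18 * b ^ 2 * c * p₂ * Complex.exp (b * z) ^ 3 with hWfdef
  have hWsq : ∀ z, Wf z ^ 2
      = 4 * lam * (c * Complex.exp (b * z) ^ 6 + Complex.exp (b * z) ^ 2) := by
    intro z
    have hxyz := hxy z
    have H1 := heq z
    have e1 : (3 * b * f z + 2 * d1 z) * (3 * b * f z - 2 * d1 z)
        = 9 * b ^ 2 * (p₁ * Complex.exp (b * z) + p₂ * Complex.exp (-b * z)) := by
      linear_combination 9 * b ^ 2 * H1 - (d1 z) ^ 2 * hab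
    have hFCz := hFC z
    simp only [hFdef, hGdef] at hFCz
    simp only [hWfdef, hlamdef]
    linear_combination (-4 * c * Complex.exp (b * z) ^ 4 * (3 * b * f z - 2 * d1 z) ^ 2) * hFCz
      + (4 * c * Complex.exp (b * z) ^ 4 * ((3 * b * f z + 2 * d1 z) * (3 * b * f z - 2 * d1 z)
          + 9 * b ^ 2 * p₁ * Complex.exp (b * z) + 9 * b ^ 2 * p₂ * Complex.exp (-b * z))) * e1
      + (324 * b ^ 4 * p₂ ^ 2 * c * Complex.exp (b * z) ^ 2
          + 324 * b ^ 4 * p₂ ^ 2 * c * Complex.exp (b * z) ^ 3 * Complex.exp (-b * z)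
          + 648 * b ^ 4 * p₁ * p₂ * c * Complex.exp (b * z) ^ 4
          + 72 * b ^ 2 * p₂ * c ^ 2 * (3 * b * f z - 2 * d1 z) ^ 2
            * Complex.exp (b * z) ^ 7) * hxyz
  -- derivative of Wf
  have hWd : ∀ z, HasDerivAt Wf
      (2 * c * ((4 * Complex.exp (b * z) ^ 3 * (b * Complex.exp (b * z)))
          * (3 * b * f z - 2 * d1 z) ^ 2
        + Complex.exp (b * z) ^ 4 * (2 * (3 * b * f z - 2 * d1 z)
          * (3 * b * d1 z - 2 * d2 z)))
      + 18 * b ^ 2 * p₁ * (b * Complex.exp (b * z))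
      - 18 * b ^ 2 * c * p₂ * (3 * Complex.exp (b * z) ^ 2 * (b * Complex.exp (b * z)))) z := by
    intro z
    have h := (((((hX z).pow 4).mul
        ((((hfd z).const_mul (3 * b)).sub ((hd1d z).const_mul 2)).pow 2)).const_mul
          (2 * c)).add ((hX z).const_mul (18 * b ^ 2 * p₁))).sub
        (((hX z).pow 3).const_mul (18 * b ^ 2 * c * p₂))
    refine h.congr_deriv ?_
    push_cast [Pi.add_apply, Pi.sub_apply, Pi.pow_apply, Pi.mul_apply]
    ring
  by_cases hlam : lam = 0
  · -- subcase λ = 0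
    have hW0 : ∀ z, Wf z = 0 := by
      intro z
      have h : Wf z ^ 2 = 0 := by rw [hWsq z, hlam]; ring
      exact (pow_eq_zero_iff two_ne_zero).mp h
    have hl' : p₁ ^ 2 + c * p₂ ^ 2 = 0 := by
      have h81 : (81 : ℂ) * b ^ 4 * (p₁ ^ 2 + c * p₂ ^ 2) = 0 := by
        rw [hlamdef] at hlam
        linear_combination hlam
      have hne81 : (81 : ℂ) * b ^ 4 ≠ 0 := mul_ne_zero (by norm_num) (pow_ne_zero _ hb)
      exact (mul_eq_zero.mp h81).resolve_left hne81
    set z₀ : ℂ := (2 * b)⁻¹ * Complex.log (-p₂ / p₁) with hz₀def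
    have hnep : -p₂ / p₁ ≠ 0 := div_ne_zero (neg_ne_zero.mpr hp₂) hp₁
    have harg : (2 : ℂ) * (b * z₀) = Complex.log (-p₂ / p₁) := by
      rw [hz₀def]
      field_simp
    have hx2 : Complex.exp (b * z₀) ^ 2 = -p₂ / p₁ := by
      rw [← Complex.exp_nat_mul]
      push_cast
      rw [harg, Complex.exp_log hnep]
    have hx2' : p₁ * Complex.exp (b * z₀) ^ 2 = -p₂ := by
      rw [hx2]
      field_simp
    have hWz := hW0 z₀
    simp only [hWfdef] at hWz
    have hV2 : p₁ * (2 * c * (Complex.exp (b * z₀) ^ 4 * (3 * b * f z₀ - 2 * d1 z₀) ^ 2)) = 0 := by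
      linear_combination p₁ * hWz + (18 * b ^ 2 * Complex.exp (b * z₀) * c * p₂) * hx2'
        - (18 * b ^ 2 * Complex.exp (b * z₀)) * hl'
    have hV0 : 3 * b * f z₀ - 2 * d1 z₀ = 0 := by
      have h2c : (2 : ℂ) * c ≠ 0 := mul_ne_zero two_ne_zero hcne
      have h0 := (mul_eq_zero.mp hV2).resolve_left hp₁
      have h1 := (mul_eq_zero.mp h0).resolve_left h2c
      have h2' := (mul_eq_zero.mp h1).resolve_left (pow_ne_zero _ (hXne z₀))
      exact (pow_eq_zero_iff two_ne_zero).mp h2'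
    -- differentiate the identity Wf ≡ 0
    have hWfun : Wf = fun _ => (0 : ℂ) := funext hW0
    have hD0 : 2 * c * ((4 * Complex.exp (b * z₀) ^ 3 * (b * Complex.exp (b * z₀)))
          * (3 * b * f z₀ - 2 * d1 z₀) ^ 2
        + Complex.exp (b * z₀) ^ 4 * (2 * (3 * b * f z₀ - 2 * d1 z₀)
          * (3 * b * d1 z₀ - 2 * d2 z₀)))
      + 18 * b ^ 2 * p₁ * (b * Complex.exp (b * z₀))
      - 18 * b ^ 2 * c * p₂ * (3 * Complex.exp (b * z₀) ^ 2 * (b * Complex.exp (b * z₀)))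
        = 0 := by
      have h := (hWd z₀).deriv
      rw [hWfun] at h
      simpa using h.symm
    have hcontr : 36 * b ^ 3 * p₁ ^ 2 * Complex.exp (b * z₀) = 0 := by
      linear_combination -p₁ * hD0 + p₁ * (8 * b * c * Complex.exp (b * z₀) ^ 4
          * (3 * b * f z₀ - 2 * d1 z₀)
          + 4 * c * Complex.exp (b * z₀) ^ 4 * (3 * b * d1 z₀ - 2 * d2 z₀)) * hV0
        - (54 * b ^ 3 * Complex.exp (b * z₀) * c * p₂) * hx2'
        + (54 * b ^ 3 * Complex.exp (b * z₀)) * hl'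
    have : (36 : ℂ) * b ^ 3 * p₁ ^ 2 * Complex.exp (b * z₀) ≠ 0 := by
      apply mul_ne_zero
      apply mul_ne_zero
      apply mul_ne_zero
      · norm_num
      · exact pow_ne_zero _ hb
      · exact pow_ne_zero _ hp₁
      · exact hXne z₀
    exact this hcontr
  · -- subcase λ ≠ 0
    set z₀ : ℂ := (4 * b)⁻¹ * Complex.log (-c⁻¹) with hz₀def
    have hnec : -c⁻¹ ≠ 0 := neg_ne_zero.mpr (inv_ne_zero hcne)
    have harg : (4 : ℂ) * (b * z₀) = Complex.log (-c⁻¹) := by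
      rw [hz₀def]
      field_simp
    have hx4 : Complex.exp (b * z₀) ^ 4 = -c⁻¹ := by
      rw [← Complex.exp_nat_mul]
      push_cast
      rw [harg, Complex.exp_log hnec]
    have hx4' : c * Complex.exp (b * z₀) ^ 4 = -1 := by
      rw [hx4]
      field_simp
    have hWz0 : Wf z₀ = 0 := by
      have h : Wf z₀ ^ 2 = 0 := by
        rw [hWsq z₀]
        linear_combination 4 * lam * Complex.exp (b * z₀) ^ 2 * hx4'
      exact (pow_eq_zero_iff two_ne_zero).mp h
    -- differentiate the square identity
    have hfun2 : (fun z => Wf z ^ 2)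
        = (fun z => 4 * lam * (c * Complex.exp (b * z) ^ 6 + Complex.exp (b * z) ^ 2)) :=
      funext hWsq
    have hL2 : HasDerivAt (fun z => Wf z ^ 2) 0 z₀ := by
      have h := (hWd z₀).fun_pow 2
      rw [hWz0] at h
      simpa using h
    have hR2 : HasDerivAt
        (fun z => 4 * lam * (c * Complex.exp (b * z) ^ 6 + Complex.exp (b * z) ^ 2))
        (4 * lam * (c * (6 * Complex.exp (b * z₀) ^ 5 * (b * Complex.exp (b * z₀)))
          + 2 * Complex.exp (b * z₀) * (b * Complex.exp (b * z₀)))) z₀ := by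
      have h := ((((hX z₀).pow 6).const_mul c).add ((hX z₀).pow 2)).const_mul (4 * lam)
      refine h.congr_deriv ?_
      push_cast [Pi.add_apply, Pi.sub_apply, Pi.pow_apply, Pi.mul_apply]
      ring
    rw [hfun2] at hL2
    have hu := hL2.unique hR2
    have hcontr : (16 : ℂ) * b * lam * Complex.exp (b * z₀) ^ 2 = 0 := by
      linear_combination hu + 24 * b * lam * Complex.exp (b * z₀) ^ 2 * hx4'
    have : (16 : ℂ) * b * lam * Complex.exp (b * z₀) ^ 2 ≠ 0 := by
      apply mul_ne_zero
      apply mul_ne_zero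
      apply mul_ne_zero
      · norm_num
      · exact hb
      · exact hlam
      · exact pow_ne_zero _ (hXne z₀)
    exact this hcontr
end
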